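/- Let ε > 0, ℓ > 0, and 0 < δ ≤ ℓ, and let x, y, x', y' ∈ ℝ^D satisfy ‖x − y‖ ≤ ℓ, ‖x − x'‖ ≤ δ and ‖y − y'‖ ≤ δ. Then exp(−2ℓδ/ε²) ≤ exp(−‖x − y‖²/(4ε²)) / exp(−‖x' − y'‖²/(4ε²)) ≤ exp(2ℓδ/ε²). -/
import Mathlib


open MeasureTheory

noncomputable section

/-- The Gaussian-like kernel `k_ε(x,y) = exp(-‖x-y‖²/(4ε²))`. -/
def gaussKer {D : ℕ} (ε : ℝ) (x y : EuclideanSpace ℝ (Fin D)) : ℝ :=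
  Real.exp (-‖x - y‖ ^ 2 / (4 * ε ^ 2))

/-- Two-sided multiplicative stability bound for the Gaussian kernel under
bounded perturbations of its arguments. -/
theorem stmt12 {D : ℕ} (ε ℓ δ : ℝ) (hε : 0 < ε) (hℓ : 0 < ℓ) (hδ : 0 < δ) (hδℓ : δ ≤ ℓ)
    (x y x' y' : EuclideanSpace ℝ (Fin D))
    (hxy : ‖x - y‖ ≤ ℓ) (hx : ‖x - x'‖ ≤ δ) (hy : ‖y - y'‖ ≤ δ) :
    Real.exp (-(2 * ℓ * δ) / ε ^ 2) ≤ gaussKer ε x y / gaussKer ε x' y' ∧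
    gaussKer ε x y / gaussKer ε x' y' ≤ Real.exp (2 * ℓ * δ / ε ^ 2) := by
  set a := ‖x - y‖ with ha_def
  set b := ‖x' - y'‖ with hb_def
  have ha0 : 0 ≤ a := norm_nonneg _
  have hb0 : 0 ≤ b := norm_nonneg _
  have hab : |a - b| ≤ 2 * δ := by
    calc |a - b| ≤ ‖(x - y) - (x' - y')‖ := abs_norm_sub_norm_le _ _
      _ = ‖(x - x') - (y - y')‖ := by congr 1; abel
      _ ≤ ‖x - x'‖ + ‖y - y'‖ := norm_sub_le _ _
      _ ≤ 2 * δ := by linarith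
  have hb_le : b ≤ ℓ + 2 * δ := by
    have := abs_le.mp hab
    linarith [this.1]
  have hsum : a + b ≤ 4 * ℓ := by linarith
  have hkey : |b ^ 2 - a ^ 2| ≤ 8 * ℓ * δ := by
    have : b ^ 2 - a ^ 2 = (b - a) * (a + b) := by ring
    rw [this, abs_mul]
    have h1 : |b - a| ≤ 2 * δ := by rw [abs_sub_comm]; exact hab
    have h2 : |a + b| = a + b := abs_of_nonneg (by linarith)
    rw [h2]
    calc |b - a| * (a + b) ≤ (2 * δ) * (4 * ℓ) := by
          apply mul_le_mul h1 hsum (by linarith) (by linarith)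
      _ = 8 * ℓ * δ := by ring
  have hεsq : (0:ℝ) < ε ^ 2 := by positivity
  have hratio : gaussKer ε x y / gaussKer ε x' y'
      = Real.exp ((b ^ 2 - a ^ 2) / (4 * ε ^ 2)) := by
    rw [gaussKer, gaussKer, ← Real.exp_sub]
    congr 1
    field_simp
    ring
  rw [hratio]
  have hle := abs_le.mp hkey
  constructor
  · apply Real.exp_le_exp.mpr
    rw [div_le_div_iff₀ hεsq (by positivity), neg_mul]
    nlinarith [hle.1]
  · apply Real.exp_le_exp.mpr
    rw [div_le_div_iff₀ (by positivity) hεsq]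
    nlinarith [hle.2]
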